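/- Let G = (V,E) be a directed graph and s ∈ V, and let G'_s be the split graph: for every v ≠ s, two vertices v_in and v_out with an edge (v_in, v_out), a single vertex s_in = s_out, and for every edge (v,w) ∈ E an edge (v_out, w_in). If C is a k-vertex-out component of G containing s, then C' := {v_out : v ∈ C} ∪ {v_in : v ∈ C} ∪ {v_in : v ∈ B}, where B is the set of boundary vertices of C, is a k-edge-out component of G'_s containing s_out; moreover every edge leaving C' in G'_s is of the form (v_in, v_out) for some v ∈ B. -/
import Mathlib


variable {V : Type*} [Fintype V] [DecidableEq V]

/-- The in-copy of a vertex in the split graph (with `s_in` identified with `s_out`). -/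
def inV (s v : V) : V ⊕ V := if v = s then Sum.inr s else Sum.inl v

/-- The out-copy of a vertex in the split graph. -/
def outV (v : V) : V ⊕ V := Sum.inr v

/-- The edges of the split graph `G'_s`: an edge `(v_out, w_in)` for every `(v,w) ∈ E` and
an edge `(v_in, v_out)` for every vertex `v`. -/
def splitEdges (E : Finset (V × V)) (s : V) : Finset ((V ⊕ V) × (V ⊕ V)) :=
  (E.image (fun e => (outV e.1, inV s e.2))) ∪
    (Finset.univ.image (fun v => (inV s v, outV v)))

/-- The boundary `B` of `C`: vertices outside `C` with an incoming edge from `C`. -/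
def boundary (E : Finset (V × V)) (C : Finset V) : Finset V :=
  Finset.univ.filter (fun v => v ∉ C ∧ ∃ u ∈ C, (u, v) ∈ E)

lemma outV_mem_iff (E : Finset (V × V)) (s : V) (C : Finset V) (hsC : s ∈ C) (v : V) :
    outV v ∈ (C.image outV ∪ C.image (inV s) ∪ (boundary E C).image (inV s)) ↔ v ∈ C := by
  simp only [Finset.mem_union, Finset.mem_image, outV, inV]
  constructor
  · rintro ((⟨w, hw, he⟩ | ⟨w, hw, he⟩) | ⟨w, hw, he⟩)
    · simp only [Sum.inr.injEq] at he; subst he; exact hw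
    · split at he
      · simp only [Sum.inr.injEq] at he; subst he; exact hsC
      · exact absurd he (by simp)
    · split at he
      · simp only [Sum.inr.injEq] at he; subst he; exact hsC
      · exact absurd he (by simp)
  · intro hv
    exact Or.inl (Or.inl ⟨v, hv, rfl⟩)

lemma inV_mem_iff (E : Finset (V × V)) (s : V) (C : Finset V) (hsC : s ∈ C) (v : V) :
    inV s v ∈ (C.image outV ∪ C.image (inV s) ∪ (boundary E C).image (inV s)) ↔
      v ∈ C ∨ v ∈ boundary E C := by
  by_cases hvs : v = s
  · subst hvs
    rw [show inV v v = outV v by simp [inV, outV], outV_mem_iff E v C hsC]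
    simp [hsC]
  · simp only [Finset.mem_union, Finset.mem_image, inV, outV, if_neg hvs]
    constructor
    · rintro ((⟨w, hw, he⟩ | ⟨w, hw, he⟩) | ⟨w, hw, he⟩)
      · exact absurd he (by simp)
      · split at he
        · exact absurd he (by simp)
        · simp only [Sum.inl.injEq] at he; subst he; exact Or.inl hw
      · split at he
        · exact absurd he (by simp)
        · simp only [Sum.inl.injEq] at he; subst he; exact Or.inr hw
    · rintro (hv | hv)
      · exact Or.inl (Or.inr ⟨v, hv, by simp [if_neg hvs]⟩)
      · exact Or.inr ⟨v, hv, by simp [if_neg hvs]⟩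

theorem stmt11 (E : Finset (V × V)) (s : V) (k : ℕ) (C : Finset V)
    (hsC : s ∈ C) (hB : (boundary E C).card ≤ k) :
    outV s ∈ (C.image outV ∪ C.image (inV s) ∪ (boundary E C).image (inV s)) ∧
      ((splitEdges E s).filter (fun e =>
          e.1 ∈ (C.image outV ∪ C.image (inV s) ∪ (boundary E C).image (inV s)) ∧
          e.2 ∉ (C.image outV ∪ C.image (inV s) ∪ (boundary E C).image (inV s)))).card ≤ k ∧
      ∀ e ∈ (splitEdges E s).filter (fun e =>
          e.1 ∈ (C.image outV ∪ C.image (inV s) ∪ (boundary E C).image (inV s)) ∧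
          e.2 ∉ (C.image outV ∪ C.image (inV s) ∪ (boundary E C).image (inV s))),
        ∃ v ∈ boundary E C, e = (inV s v, outV v) := by
  set C' := C.image outV ∪ C.image (inV s) ∪ (boundary E C).image (inV s) with hC'
  have key : ∀ e ∈ (splitEdges E s).filter (fun e => e.1 ∈ C' ∧ e.2 ∉ C'),
      ∃ v ∈ boundary E C, e = (inV s v, outV v) := by
    intro e he
    rw [Finset.mem_filter] at he
    obtain ⟨hmem, h1, h2⟩ := he
    simp only [splitEdges, Finset.mem_union, Finset.mem_image] at hmem
    rcases hmem with ⟨⟨u, w⟩, huw, he⟩ | ⟨v, _, he⟩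
    · exfalso
      subst he
      simp only at h1 h2
      rw [outV_mem_iff E s C hsC] at h1
      rw [inV_mem_iff E s C hsC] at h2
      push_neg at h2
      exact h2.2 (by simp only [boundary, Finset.mem_filter]; exact ⟨Finset.mem_univ _, h2.1, u, h1, huw⟩)
    · subst he
      simp only at h1 h2
      rw [inV_mem_iff E s C hsC] at h1
      rw [outV_mem_iff E s C hsC] at h2
      rcases h1 with h1 | h1
      · exact absurd h1 h2
      · exact ⟨v, h1, rfl⟩
  refine ⟨?_, ?_, key⟩
  · rw [outV_mem_iff E s C hsC]; exact hsC
  · have hsub : (splitEdges E s).filter (fun e => e.1 ∈ C' ∧ e.2 ∉ C') ⊆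
        (boundary E C).image (fun v => (inV s v, outV v)) := by
      intro e he
      obtain ⟨v, hv, he⟩ := key e he
      exact Finset.mem_image.mpr ⟨v, hv, he.symm⟩
    calc _ ≤ ((boundary E C).image (fun v => (inV s v, outV v))).card :=
            Finset.card_le_card hsub
      _ ≤ (boundary E C).card := Finset.card_image_le
      _ ≤ k := hB
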